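/- Let l ≥ 3 and r ≥ 2 be integers and M ∈ ℝ. Define ḡ(X) = (l/r)·h₂(rX/2) − (l−1)·h₂(X) + M·X for X ∈ [0, 2/r]. Then ḡ(0) = 0 and there exists δ > 0 such that ḡ(X) < 0 for all X ∈ (0, δ]. -/

import Mathlib

open Finset

noncomputable section

/-- Binary entropy in nats, with the convention `0 * log 0 = 0`
(automatic since `Real.log 0 = 0`). -/
def h2 (x : ℝ) : ℝ := -x * Real.log x - (1 - x) * Real.log (1 - x)

/-- The upper-bounding function
`ḡ(X) = (l/r) h₂(rX/2) - (l-1) h₂(X) + M X` from Appendix A. -/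
def gbar (l r : ℕ) (M X : ℝ) : ℝ :=
  (l : ℝ) / (r : ℝ) * h2 ((r : ℝ) * X / 2) - ((l : ℝ) - 1) * h2 X + M * X

lemma tail_bound (t : ℝ) (ht0 : 0 ≤ t) (ht : t ≤ 1/2) :
    0 ≤ -(1-t)*Real.log (1-t) ∧ -(1-t)*Real.log (1-t) ≤ t := by
  have h1 : (0:ℝ) < 1 - t := by linarith
  have hlog_le : Real.log (1-t) ≤ 0 := Real.log_nonpos (by linarith) (by linarith)
  have hlow : 1 - (1-t)⁻¹ ≤ Real.log (1-t) := Real.one_sub_inv_le_log_of_pos h1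
  have hinv : (1-t) * (1-t)⁻¹ = 1 := mul_inv_cancel₀ (ne_of_gt h1)
  constructor
  · nlinarith
  · nlinarith [mul_le_mul_of_nonneg_left hlow h1.le]

set_option maxHeartbeats 2000000 in
/-- **`ḡ` vanishes at `0` and is negative on a punctured right neighborhood
of `0`.**  For `l ≥ 3`, `r ≥ 2` and any `M ∈ ℝ`, `ḡ(0) = 0` and there is
`δ > 0` with `ḡ(X) < 0` for all `X ∈ (0, δ]`. -/
theorem gbar_neg_near_zero (l r : ℕ) (hl : 3 ≤ l) (hr : 2 ≤ r) (M : ℝ) :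
    gbar l r M 0 = 0 ∧ ∃ δ : ℝ, 0 < δ ∧ ∀ X : ℝ, 0 < X → X ≤ δ →
      gbar l r M X < 0 := by
  have hA : (3:ℝ) ≤ (l:ℝ) := by exact_mod_cast hl
  have hB : (2:ℝ) ≤ (r:ℝ) := by exact_mod_cast hr
  set A := (l:ℝ) with hAdef
  set B := (r:ℝ) with hBdef
  have hB0 : (0:ℝ) < B := by linarith
  have hA0 : (0:ℝ) < A := by linarith
  constructor
  · simp [gbar, h2]
  · obtain ⟨C, hCdef⟩ : ∃ C : ℝ, C = A/2 * |Real.log (B/2)| + |M| + A := ⟨_, rfl⟩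
    have hC0 : (0:ℝ) ≤ C := by rw [hCdef]; positivity
    refine ⟨min (1/B) (Real.exp (-2*C - 2)),
      lt_min (by positivity) (Real.exp_pos _), ?_⟩
    intro X hX hXδ
    have hX1 : X ≤ 1/B := le_trans hXδ (min_le_left _ _)
    have hXe : X ≤ Real.exp (-2*C-2) := le_trans hXδ (min_le_right _ _)
    have hBX : B * X ≤ 1 := by
      have := (le_div_iff₀ hB0).mp hX1
      linarith [mul_comm X B]
    have hu : B*X/2 ≤ 1/2 := by linarith
    have hX12 : X ≤ 1/2 := by nlinarith
    obtain ⟨hT1a, hT1b⟩ := tail_bound (B*X/2) (by positivity) hu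
    obtain ⟨hT2a, hT2b⟩ := tail_bound X hX.le hX12
    have hlogu : Real.log (B*X/2) = Real.log (B/2) + Real.log X := by
      rw [show B*X/2 = (B/2)*X by ring,
        Real.log_mul (by positivity) (ne_of_gt hX)]
    have hlogX : Real.log X ≤ -2*C - 2 := by
      calc Real.log X ≤ Real.log (Real.exp (-2*C-2)) :=
            Real.log_le_log hX hXe
        _ = -2*C-2 := Real.log_exp _
    have hexp : gbar l r M X = (A/2 - 1)*(X*Real.log X)
        + (-(A/2)*Real.log (B/2) + M)*X
        + (A/B)*(-(1-B*X/2)*Real.log (1-B*X/2))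
        - (A-1)*(-(1-X)*Real.log (1-X)) := by
      simp only [gbar, h2, hlogu, ← hAdef, ← hBdef]
      field_simp
      ring
    rw [hexp]
    have hAB : A/B * (-(1-B*X/2)*Real.log (1-B*X/2)) ≤ A/B * (B*X/2) :=
      mul_le_mul_of_nonneg_left hT1b (by positivity)
    have hABeq : A/B * (B*X/2) = A*X/2 := by field_simp
    have h2t : (0:ℝ) ≤ (A-1)*(-(1-X)*Real.log (1-X)) :=
      mul_nonneg (by linarith) hT2a
    have hlogX0 : Real.log X ≤ 0 := Real.log_nonpos hX.le (by linarith)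
    have hXL : X * Real.log X ≤ 0 := mul_nonpos_of_nonneg_of_nonpos hX.le hlogX0
    have hXlog : (A/2-1)*(X*Real.log X) ≤ (1/2)*(X*Real.log X) := by
      nlinarith [mul_nonneg (show (0:ℝ) ≤ A/2 - 3/2 by linarith) (neg_nonneg.mpr hXL)]
    have hXlog2 : (1/2)*(X*Real.log X) ≤ X*(-C-1) := by
      have h := mul_le_mul_of_nonneg_left hlogX hX.le
      linarith [h]
    have habs1 : -(A/2)*Real.log (B/2) ≤ A/2 * |Real.log (B/2)| := by
      have h := mul_le_mul_of_nonneg_left (neg_le_abs (Real.log (B/2)))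
        (show (0:ℝ) ≤ A/2 by linarith)
      linarith
    have habs2 : M ≤ |M| := le_abs_self M
    have hlin : (-(A/2)*Real.log (B/2) + M)*X ≤ (A/2 * |Real.log (B/2)| + |M|)*X := by
      apply mul_le_mul_of_nonneg_right _ hX.le
      linarith
    have step : (A/2 - 1)*(X*Real.log X) + (-(A/2)*Real.log (B/2) + M)*X
        + (A/B)*(-(1-B*X/2)*Real.log (1-B*X/2))
        - (A-1)*(-(1-X)*Real.log (1-X))
        ≤ X*(-C-1) + (A/2 * |Real.log (B/2)| + |M|)*X + A*X/2 := by
      linarith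
    have heq : X*(-C-1) + (A/2 * |Real.log (B/2)| + |M|)*X + A*X/2
        = -(X*(1+A/2)) := by rw [hCdef]; ring
    have hpos : 0 < X*(1+A/2) := mul_pos hX (by linarith)
    linarith
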